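/- arXiv:2505.04458 — 2 statements merged into one kernel-verified Lean document; each statement's English description precedes it below -/
import Mathlib

section
/- Every closed (compact, boundaryless) smooth hypersurface in ℝⁿ has at least one point where the mean curvature with respect to the outward normal is positive. Consequently, if the top stratum Σ of MAX(u) is a closed hypersurface satisfying H ≤ -(n-1)/R everywhere for some R > 0, a contradiction arises, so the case τ(u,Ω₁) < √n is impossible in the setting of Theorem 5.1. -/
open Set

noncomputable section

/-- The Euclidean divergence of a vector field. -/
def divg {n : ℕ} (X : EuclideanSpace ℝ (Fin n) → EuclideanSpace ℝ (Fin n))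
    (x : EuclideanSpace ℝ (Fin n)) : ℝ :=
  ∑ i, fderiv ℝ (fun y => X y i) x (EuclideanSpace.single i 1)

private lemma one_sided_deriv_nonneg {φ : ℝ → ℝ} {d : ℝ}
    (hd : HasDerivAt φ d 0) (hmin : ∀ t, 0 ≤ t → φ 0 ≤ φ t) : 0 ≤ d := by
  have h := hasDerivAt_iff_tendsto_slope.mp hd
  have h' : Filter.Tendsto (slope φ 0) (nhdsWithin 0 (Set.Ioi 0)) (nhds d) :=
    h.mono_left (nhdsWithin_mono 0 (fun x hx => by
      simp only [Set.mem_compl_iff, Set.mem_singleton_iff]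
      exact ne_of_gt hx))
  refine ge_of_tendsto h' (eventually_nhdsWithin_of_forall fun t ht => ?_)
  have hs : slope φ 0 t = (φ t - φ 0) / t := by
    simp [slope_def_field]
  rw [hs]
  exact div_nonneg (sub_nonneg.mpr (hmin t (le_of_lt ht))) (le_of_lt ht)

private lemma second_deriv_nonneg {φ ψ : ℝ → ℝ} {d : ℝ}
    (hφ : ∀ t, HasDerivAt φ (ψ t) t) (hψ : HasDerivAt ψ d 0)
    (hmin : ∀ t, φ 0 ≤ φ t) : ψ 0 = 0 ∧ 0 ≤ d := by
  have hψ0 : ψ 0 = 0 := by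
    have h1 : IsLocalMin φ 0 := Filter.Eventually.of_forall hmin
    have h2 := h1.deriv_eq_zero
    rwa [(hφ 0).deriv] at h2
  refine ⟨hψ0, ?_⟩
  by_contra hlt
  push_neg at hlt
  have h := hasDerivAt_iff_tendsto_slope.mp hψ
  have h' : Filter.Tendsto (slope ψ 0) (nhdsWithin 0 (Set.Ioi 0)) (nhds d) :=
    h.mono_left (nhdsWithin_mono 0 (fun x hx => by
      simp only [Set.mem_compl_iff, Set.mem_singleton_iff]
      exact ne_of_gt hx))
  have hev : ∀ᶠ t in nhdsWithin 0 (Set.Ioi 0), slope ψ 0 t < 0 :=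
    h'.eventually_lt_const hlt
  obtain ⟨u, hu, hIoo⟩ := mem_nhdsGT_iff_exists_Ioo_subset.mp hev
  have hu0 : (0:ℝ) < u := hu
  set t0 := u / 2 with ht0def
  have ht00 : 0 < t0 := by positivity
  have ht0u : t0 < u := by simpa [ht0def] using half_lt_self hu0
  have hanti : StrictAntiOn φ (Icc 0 t0) := by
    apply strictAntiOn_of_deriv_neg (convex_Icc 0 t0)
    · exact fun x _ => (hφ x).continuousAt.continuousWithinAt
    · intro x hx
      rw [interior_Icc] at hx
      rw [(hφ x).deriv]
      have hx1 : x ∈ Ioo 0 u := ⟨hx.1, lt_trans hx.2 ht0u⟩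
      have hsl := hIoo hx1
      have hs : slope ψ 0 x = ψ x / x := by simp [slope_def_field, hψ0]
      rw [Set.mem_setOf_eq, hs] at hsl
      rcases div_neg_iff.mp hsl with ⟨_, h2⟩ | ⟨h1, _⟩
      · exact absurd hx.1 (not_lt.mpr (le_of_lt h2))
      · exact h1
  have hcon : φ t0 < φ 0 :=
    hanti ⟨le_refl 0, le_of_lt ht00⟩ ⟨le_of_lt ht00, le_refl _⟩ ht00
  exact absurd (hmin t0) (not_le.mpr hcon)

private lemma divg_eq_sum {n : ℕ} {X : EuclideanSpace ℝ (Fin n) → EuclideanSpace ℝ (Fin n)}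
    {x : EuclideanSpace ℝ (Fin n)} {D : EuclideanSpace ℝ (Fin n) →L[ℝ] EuclideanSpace ℝ (Fin n)}
    (h : HasFDerivAt X D x) :
    divg X x = ∑ i, D (EuclideanSpace.single i 1) i := by
  unfold divg
  refine Finset.sum_congr rfl fun i _ => ?_
  have h1 := (EuclideanSpace.proj i).hasFDerivAt.comp x h
  have h2 : (fun y => X y i) = (⇑(EuclideanSpace.proj (𝕜 := ℝ) i) ∘ X) := by
    funext y
    simp [PiLp.proj_apply]
  rw [h2, h1.fderiv]
  rfl

private lemma trace_inner_basis_change {E : Type*} [NormedAddCommGroup E]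
    [InnerProductSpace ℝ E] [FiniteDimensional ℝ E] {ι κ : Type*} [Fintype ι] [Fintype κ]
    (B : E →L[ℝ] E) (b : OrthonormalBasis ι ℝ E) (c : OrthonormalBasis κ ℝ E) :
    ∑ i, (inner ℝ (B (b i)) (b i) : ℝ) = ∑ j, (inner ℝ (B (c j)) (c j) : ℝ) := by
  have key : ∀ i, (inner ℝ (B (b i)) (b i) : ℝ)
      = ∑ j, (inner ℝ (B (b i)) (c j) : ℝ) * inner ℝ (c j) (b i) :=
    fun i => (c.sum_inner_mul_inner _ _).symm
  rw [Finset.sum_congr rfl fun i _ => key i, Finset.sum_comm]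
  refine Finset.sum_congr rfl fun j _ => ?_
  have key2 : ∀ i, (inner ℝ (B (b i)) (c j) : ℝ) * inner ℝ (c j) (b i)
      = (inner ℝ (c j) (b i) : ℝ) * inner ℝ (b i) ((ContinuousLinearMap.adjoint B) (c j)) := by
    intro i
    rw [ContinuousLinearMap.adjoint_inner_right, real_inner_comm (b i), mul_comm]
  rw [Finset.sum_congr rfl fun i _ => key2 i, b.sum_inner_mul_inner,
    ContinuousLinearMap.adjoint_inner_right, real_inner_comm]

private lemma sum_inner_single {n : ℕ}
    (A : EuclideanSpace ℝ (Fin n) →L[ℝ] EuclideanSpace ℝ (Fin n))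
    (u : EuclideanSpace ℝ (Fin n)) :
    ∑ i, (inner ℝ (A (EuclideanSpace.single i 1)) u : ℝ) * u i = inner ℝ (A u) u := by
  have hu : ∑ i, u i • EuclideanSpace.single (𝕜 := ℝ) i (1:ℝ) = u := by
    have h := (EuclideanSpace.basisFun (Fin n) ℝ).sum_repr u
    simpa [EuclideanSpace.basisFun_apply, EuclideanSpace.basisFun_repr] using h
  calc ∑ i, (inner ℝ (A (EuclideanSpace.single i 1)) u : ℝ) * u i
      = ∑ i, (inner ℝ (u i • A (EuclideanSpace.single i 1)) u : ℝ) := by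
        refine Finset.sum_congr rfl fun i _ => ?_
        rw [real_inner_smul_left, mul_comm]
    _ = inner ℝ (∑ i, u i • A (EuclideanSpace.single i 1)) u := (sum_inner _ _ _).symm
    _ = inner ℝ (A (∑ i, u i • EuclideanSpace.single (𝕜 := ℝ) i (1:ℝ))) u := by
        rw [map_sum]
        congr 1
        refine Finset.sum_congr rfl fun i _ => ?_
        rw [map_smul]
    _ = inner ℝ (A u) u := by rw [hu]

set_option maxHeartbeats 1600000 in
private lemma exists_positive_mean_curvature_point (n : ℕ) (hn : 2 ≤ n)
    (f : EuclideanSpace ℝ (Fin n) → ℝ) (hf : ContDiff ℝ 2 f)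
    (hK : IsCompact {x | f x ≤ 0})
    (hne : {x : EuclideanSpace ℝ (Fin n) | f x = 0}.Nonempty)
    (hreg : ∀ x, f x = 0 → gradient f x ≠ 0) :
    ∃ p, f p = 0 ∧
      0 < divg (fun y => ‖gradient f y‖⁻¹ • gradient f y) p := by
  have hfd : Differentiable ℝ f := hf.differentiable (by norm_num)
  have hF : ∀ x, HasFDerivAt f
      (InnerProductSpace.toDual ℝ (EuclideanSpace ℝ (Fin n)) (gradient f x)) x := by
    intro x
    have h1 := (hfd x).hasFDerivAt
    have h2 : InnerProductSpace.toDual ℝ (EuclideanSpace ℝ (Fin n)) (gradient f x)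
        = fderiv ℝ f x := (InnerProductSpace.toDual ℝ _).apply_symm_apply _
    rwa [h2]
  have hgC : ContDiff ℝ 1 (gradient f) := by
    have h1 : ContDiff ℝ 1 (fderiv ℝ f) := hf.fderiv_right (by norm_num)
    exact ((InnerProductSpace.toDual ℝ (EuclideanSpace ℝ (Fin n))).symm.contDiff).comp h1
  have hgd : Differentiable ℝ (gradient f) := hgC.differentiable (by norm_num)
  obtain ⟨z0, hz0⟩ := hne
  have hz0K : z0 ∈ {x | f x ≤ 0} := le_of_eq hz0
  obtain ⟨p, hpK, hpmax⟩ := hK.exists_isMaxOn ⟨z0, hz0K⟩ continuous_norm.continuousOn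
  have hub : ∀ x, f x ≤ 0 → ‖x‖ ≤ ‖p‖ := fun x hx => hpmax hx
  have hp0 : p ≠ 0 := by
    intro hp
    have hK0 : ∀ x, f x ≤ 0 → x = 0 := by
      intro x hx
      have h := hub x hx
      rw [hp, norm_zero] at h
      exact norm_eq_zero.mp (le_antisymm h (norm_nonneg x))
    have hz00 : z0 = 0 := hK0 z0 (le_of_eq hz0)
    have hf0 : f 0 = 0 := by rw [← hz00]; exact hz0
    have hmin : ∀ x, f 0 ≤ f x := by
      intro x
      rcases le_or_gt (f x) 0 with h | h
      · rw [hK0 x h]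
      · rw [hf0]; exact le_of_lt h
    have hloc : IsLocalMin f 0 := Filter.Eventually.of_forall hmin
    have hfz : fderiv ℝ f 0 = 0 := hloc.fderiv_eq_zero
    have hg0 : gradient f 0 = 0 := by
      show (InnerProductSpace.toDual ℝ _).symm (fderiv ℝ f 0) = 0
      rw [hfz]; simp
    exact hreg 0 hf0 hg0
  set r := ‖p‖ with hrdef
  have hr : 0 < r := norm_pos_iff.mpr hp0
  have hfple : f p ≤ 0 := hpK
  have hfp : f p = 0 := by
    by_contra hne'
    have hlt : f p < 0 := lt_of_le_of_ne hfple hne'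
    have hcont : Filter.Tendsto (fun t : ℝ => f (t • p)) (nhds 1) (nhds (f p)) := by
      have hc : Continuous fun t : ℝ => f (t • p) :=
        hf.continuous.comp (continuous_id.smul continuous_const)
      simpa using hc.tendsto 1
    have hev : ∀ᶠ t in nhds (1:ℝ), f (t • p) < 0 := hcont.eventually_lt_const hlt
    have hev2 : ∀ᶠ t in nhdsWithin (1:ℝ) (Set.Ioi 1),
        f (t • p) < 0 ∧ t ∈ Set.Ioi (1:ℝ) :=
      (hev.filter_mono nhdsWithin_le_nhds).and eventually_mem_nhdsWithin
    obtain ⟨t, ht1, ht2⟩ := hev2.exists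
    have hle : ‖t • p‖ ≤ r := hub _ (le_of_lt ht1)
    rw [norm_smul, Real.norm_eq_abs, ← hrdef] at hle
    have htgt : (1:ℝ) < t := ht2
    nlinarith [le_abs_self t]
  have hout : ∀ x : EuclideanSpace ℝ (Fin n), r ≤ ‖x‖ → 0 ≤ f x := by
    intro x hx
    rcases eq_or_lt_of_le hx with heq | hlt
    · have h1 : Filter.Tendsto (fun k : ℕ => (1 + 1/(k+1:ℝ))) Filter.atTop (nhds 1) := by
        have h0 := tendsto_one_div_add_atTop_nhds_zero_nat (𝕜 := ℝ)
        simpa using (tendsto_const_nhds (x := (1:ℝ)) (f := Filter.atTop)).add h0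
      have h2 : Filter.Tendsto (fun k : ℕ => (1 + 1/(k+1:ℝ)) • x) Filter.atTop
          (nhds ((1:ℝ) • x)) := h1.smul tendsto_const_nhds
      rw [one_smul] at h2
      have hseq : Filter.Tendsto (fun k : ℕ => f ((1 + 1/(k+1:ℝ)) • x)) Filter.atTop
          (nhds (f x)) := (hf.continuous.tendsto x).comp h2
      refine ge_of_tendsto hseq (Filter.Eventually.of_forall fun k => ?_)
      have hpos : (0:ℝ) < 1/(k+1:ℝ) := by positivity
      have hnorm : r < ‖(1 + 1/(k+1:ℝ)) • x‖ := by
        rw [norm_smul, Real.norm_eq_abs, ← heq, abs_of_pos (by positivity : (0:ℝ) < 1 + 1/(k+1:ℝ))]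
        nlinarith
      by_contra hneg
      push_neg at hneg
      exact absurd (hub _ (le_of_lt hneg)) (not_le.mpr hnorm)
    · by_contra hneg
      push_neg at hneg
      exact absurd (hub _ (le_of_lt hneg)) (not_le.mpr hlt)
  -- key curve lemma
  set A := fderiv ℝ (gradient f) p with hAdef
  have hA : HasFDerivAt (gradient f) A p := (hgd p).hasFDerivAt
  have hgp : gradient f p ≠ 0 := hreg p hfp
  have hkey : ∀ w : EuclideanSpace ℝ (Fin n), (inner ℝ p w : ℝ) = 0 → ‖w‖ = r →
      (inner ℝ (gradient f p) w : ℝ) = 0 ∧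
        (inner ℝ (gradient f p) p : ℝ) ≤ inner ℝ (A w) w := by
    intro w hpw hwr
    set γ : ℝ → EuclideanSpace ℝ (Fin n) := fun t => Real.cos t • p + Real.sin t • w
      with hγdef
    have hγ0 : γ 0 = p := by simp [hγdef]
    have hγnorm : ∀ t, ‖γ t‖ = r := by
      intro t
      have hsq : ‖γ t‖^2 = r^2 := by
        rw [hγdef]
        simp only
        rw [norm_add_sq_real, real_inner_smul_left, real_inner_smul_right, hpw,
          norm_smul, norm_smul, Real.norm_eq_abs, Real.norm_eq_abs, hwr, ← hrdef]
        have hid := Real.sin_sq_add_cos_sq t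
        nlinarith [sq_abs (Real.cos t), sq_abs (Real.sin t)]
      calc ‖γ t‖ = Real.sqrt (‖γ t‖^2) := (Real.sqrt_sq (norm_nonneg _)).symm
        _ = Real.sqrt (r^2) := by rw [hsq]
        _ = r := Real.sqrt_sq hr.le
    have hγ' : ∀ t, HasDerivAt γ ((-Real.sin t) • p + Real.cos t • w) t := fun t =>
      ((Real.hasDerivAt_cos t).smul_const p).add ((Real.hasDerivAt_sin t).smul_const w)
    set W : ℝ → EuclideanSpace ℝ (Fin n) := fun t => (-Real.sin t) • p + Real.cos t • w
      with hWdef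
    have hW0 : W 0 = w := by simp [hWdef]
    set ψ : ℝ → ℝ := fun t => (inner ℝ (gradient f (γ t)) (W t) : ℝ) with hψdef
    have hφ : ∀ t, HasDerivAt (fun s => f (γ s)) (ψ t) t := by
      intro t
      have h1 := (hF (γ t)).comp_hasDerivAt t (hγ' t)
      have h2 : (InnerProductSpace.toDual ℝ (EuclideanSpace ℝ (Fin n)))
          (gradient f (γ t)) (W t) = ψ t := InnerProductSpace.toDual_apply_apply
      rw [h2] at h1
      exact h1
    have hA' : HasFDerivAt (gradient f) A (γ 0) := hγ0 ▸ hA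
    have hG : HasDerivAt (fun t => gradient f (γ t)) (A w) 0 := by
      have h1 := hA'.comp_hasDerivAt 0 (hγ' 0)
      have h2 : (-Real.sin 0) • p + Real.cos 0 • w = w := by simp
      rwa [h2] at h1
    have hWd : HasDerivAt W (-p) 0 := by
      have h1 := ((Real.hasDerivAt_sin 0).neg.smul_const p).add
        ((Real.hasDerivAt_cos 0).smul_const w)
      have h2 : HasDerivAt W ((-Real.cos 0) • p + (-Real.sin 0) • w) 0 := h1
      convert h2 using 1
      simp
    have hψd : HasDerivAt ψ ((inner ℝ (gradient f (γ 0)) (-p) : ℝ) + inner ℝ (A w) (W 0)) 0 :=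
      HasDerivAt.inner ℝ hG hWd
    rw [hγ0, hW0] at hψd
    have hmin : ∀ t, f (γ 0) ≤ f (γ t) := by
      intro t
      rw [hγ0, hfp]
      exact hout _ (le_of_eq (hγnorm t).symm)
    obtain ⟨hψ00, hd0⟩ := second_deriv_nonneg hφ hψd hmin
    constructor
    · rw [hψdef] at hψ00
      simp only at hψ00
      rwa [hγ0, hW0] at hψ00
    · rw [inner_neg_right] at hd0
      linarith
  -- radial first-order condition
  have hrad : (0:ℝ) ≤ inner ℝ (gradient f p) p := by
    have hδ : HasDerivAt (fun t : ℝ => (1+t) • p) p 0 := by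
      have h1 : HasDerivAt (fun t : ℝ => 1 + t) 1 0 := (hasDerivAt_id 0).const_add 1
      simpa using h1.smul_const p
    have h10 : ((1:ℝ)+(0:ℝ)) • p = p := by norm_num
    have hρ : HasDerivAt (fun t : ℝ => f ((1+t) • p)) (inner ℝ (gradient f p) p : ℝ) 0 := by
      have hFp : HasFDerivAt f
          (InnerProductSpace.toDual ℝ (EuclideanSpace ℝ (Fin n)) (gradient f p))
          (((1:ℝ)+(0:ℝ)) • p) := by rw [h10]; exact hF p
      have h2 := hFp.comp_hasDerivAt 0 hδ
      have h3 : (InnerProductSpace.toDual ℝ (EuclideanSpace ℝ (Fin n)))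
          (gradient f p) p = (inner ℝ (gradient f p) p : ℝ) := InnerProductSpace.toDual_apply_apply
      rw [h3] at h2
      exact h2
    apply one_sided_deriv_nonneg hρ
    intro t ht
    have hge : r ≤ ‖(1+t) • p‖ := by
      rw [norm_smul, Real.norm_eq_abs, ← hrdef, abs_of_pos (by linarith : (0:ℝ) < 1+t)]
      nlinarith
    show f ((1+(0:ℝ)) • p) ≤ f ((1+t) • p)
    rw [h10, hfp]
    exact hout _ hge
  -- the gradient is radial: gradient f p = c • p with c > 0
  have hpp : (inner ℝ p p : ℝ) = r^2 := by
    rw [real_inner_self_eq_norm_mul_norm, ← hrdef]; ring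
  obtain ⟨c, hc⟩ : ∃ c : ℝ, gradient f p = c • p := by
    set q := gradient f p - ((inner ℝ (gradient f p) p : ℝ) / r^2) • p with hqdef
    have hq : (inner ℝ p q : ℝ) = 0 := by
      rw [hqdef, inner_sub_right, real_inner_smul_right, hpp]
      have : (inner ℝ p (gradient f p) : ℝ) = inner ℝ (gradient f p) p := real_inner_comm _ _
      rw [this]
      field_simp
      ring
    rcases eq_or_ne q 0 with h0 | h0
    · refine ⟨(inner ℝ (gradient f p) p : ℝ) / r^2, ?_⟩
      rw [hqdef, sub_eq_zero] at h0
      exact h0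
    · exfalso
      have hqn : (0:ℝ) < ‖q‖ := norm_pos_iff.mpr h0
      have hw := hkey ((r / ‖q‖) • q)
        (by rw [real_inner_smul_right, hq]; ring)
        (by rw [norm_smul, Real.norm_eq_abs, abs_of_pos (by positivity)]; field_simp)
      have h1 := hw.1
      rw [real_inner_smul_right] at h1
      have hrq : r / ‖q‖ ≠ 0 := by positivity
      have h2 : (inner ℝ (gradient f p) q : ℝ) = 0 := by
        rcases mul_eq_zero.mp h1 with h | h
        · exact absurd h hrq
        · exact h
      have h3 : (inner ℝ (gradient f p) q : ℝ) = ‖q‖^2 := by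
        have hgpq : gradient f p = q + ((inner ℝ (gradient f p) p : ℝ)/r^2) • p := by
          rw [hqdef]; abel
        nth_rewrite 1 [hgpq]
        rw [inner_add_left, real_inner_smul_left, hq, real_inner_self_eq_norm_mul_norm]
        ring
      rw [h2] at h3
      exact h0 (norm_eq_zero.mp (by nlinarith))
  have hgpp : (inner ℝ (gradient f p) p : ℝ) = c * r^2 := by
    rw [hc, real_inner_smul_left, hpp]
  have hc0 : 0 < c := by
    have hge : 0 ≤ c := by nlinarith [mul_pos hr hr]
    rcases eq_or_lt_of_le hge with heq | h
    · exfalso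
      apply hgp
      rw [hc, ← heq, zero_smul]
    · exact h
  -- second fundamental form bound
  have hHess : ∀ w : EuclideanSpace ℝ (Fin n), (inner ℝ p w : ℝ) = 0 → ‖w‖ = 1 →
      c ≤ inner ℝ (A w) w := by
    intro w h1 h2
    have h3 := (hkey (r • w)
      (by rw [real_inner_smul_right, h1]; ring)
      (by rw [norm_smul, Real.norm_eq_abs, h2, abs_of_pos hr]; ring)).2
    rw [ContinuousLinearMap.map_smul, real_inner_smul_left, real_inner_smul_right,
      hgpp] at h3
    have hr2 : 0 < r^2 := by positivity
    nlinarith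
  -- adapted orthonormal basis
  have hn0 : 0 < n := by omega
  set i0 : Fin n := ⟨0, hn0⟩ with hi0def
  have hup : ‖r⁻¹ • p‖ = 1 := by
    rw [norm_smul, Real.norm_eq_abs, abs_of_pos (inv_pos.mpr hr), ← hrdef]
    field_simp
  have horth : Orthonormal ℝ (Set.restrict {i0} (fun _ : Fin n => r⁻¹ • p)) := by
    constructor
    · intro i
      exact hup
    · intro i j hij
      exact absurd (Subtype.ext ((Set.mem_singleton_iff.mp i.2).trans
        (Set.mem_singleton_iff.mp j.2).symm)) hij
  obtain ⟨b, hb⟩ := Orthonormal.exists_orthonormalBasis_extension_of_card_eq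
    (𝕜 := ℝ) (by simp) horth
  have hbi0 : b i0 = r⁻¹ • p := hb i0 (Set.mem_singleton i0)
  -- derivative of the unit normal field
  set m := ‖gradient f p‖ with hmdef
  have hm : 0 < m := norm_pos_iff.mpr hgp
  have hsq := HasFDerivAt.inner ℝ hA hA
  have hfun : (fun y => ‖gradient f y‖)
      = fun y => Real.sqrt (inner ℝ (gradient f y) (gradient f y) : ℝ) := by
    funext y
    rw [real_inner_self_eq_norm_mul_norm, Real.sqrt_mul_self (norm_nonneg _)]
  have hsne : (inner ℝ (gradient f p) (gradient f p) : ℝ) ≠ 0 := by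
    rw [real_inner_self_eq_norm_mul_norm]
    exact ne_of_gt (mul_pos hm hm)
  have hsqrteq : Real.sqrt (inner ℝ (gradient f p) (gradient f p) : ℝ) = m := by
    rw [real_inner_self_eq_norm_mul_norm, Real.sqrt_mul_self (norm_nonneg _)]
  have hnrm : HasFDerivAt (fun y => ‖gradient f y‖)
      ((1 / (2 * Real.sqrt (inner ℝ (gradient f p) (gradient f p) : ℝ))) •
        ((fderivInnerCLM ℝ (gradient f p, gradient f p)).comp (A.prod A))) p := by
    rw [hfun]
    exact hsq.sqrt hsne
  have hminv := (hasFDerivAt_inv (ne_of_gt hm)).comp p hnrm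
  have hν := hminv.smul hA
  have hdg : divg (fun y => ‖gradient f y‖⁻¹ • gradient f y) p
      = ∑ i, (m⁻¹ * (A (EuclideanSpace.single i 1) i)
          - m⁻¹*m⁻¹*m⁻¹ * ((inner ℝ (A (EuclideanSpace.single i 1)) (gradient f p) : ℝ)
              * gradient f p i)) := by
    rw [divg_eq_sum (X := fun y => ‖gradient f y‖⁻¹ • gradient f y) hν]
    refine Finset.sum_congr rfl fun i _ => ?_
    simp only [ContinuousLinearMap.add_apply, ContinuousLinearMap.smul_apply,
      ContinuousLinearMap.coe_smul', Pi.smul_apply, ContinuousLinearMap.smulRight_apply,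
      ContinuousLinearMap.comp_apply, ContinuousLinearMap.one_apply,
      ContinuousLinearMap.prod_apply, fderivInnerCLM_apply, Function.comp_apply,
      PiLp.add_apply, PiLp.smul_apply, smul_eq_mul, hsqrteq,
      ContinuousLinearMap.toSpanSingleton_apply, ← hmdef]
    rw [real_inner_comm (gradient f p) (A (EuclideanSpace.single i 1))]
    field_simp
    ring
  refine ⟨p, hfp, ?_⟩
  set Q : ℝ := (inner ℝ (A p) p : ℝ) with hQdef
  have hsum2 : ∑ i, (inner ℝ (A (EuclideanSpace.single i 1)) (gradient f p) : ℝ)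
      * gradient f p i = c^2 * Q := by
    have h1 : ∀ i : Fin n,
        (inner ℝ (A (EuclideanSpace.single i 1)) (gradient f p) : ℝ) * gradient f p i
        = c^2 * ((inner ℝ (A (EuclideanSpace.single i 1)) p : ℝ) * p i) := by
      intro i
      rw [hc, real_inner_smul_right]
      have hcp : (c • p : EuclideanSpace ℝ (Fin n)) i = c * p i := rfl
      rw [hcp]
      ring
    rw [Finset.sum_congr rfl fun i _ => h1 i, ← Finset.mul_sum, sum_inner_single A p]
  set T : ℝ := ∑ i, A (EuclideanSpace.single i 1) i with hTdef
  have hT : T = ∑ j, (inner ℝ (A (b j)) (b j) : ℝ) := by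
    rw [hTdef]
    have h1 : ∀ i : Fin n, A (EuclideanSpace.single i 1) i
        = (inner ℝ (A ((EuclideanSpace.basisFun (Fin n) ℝ) i))
            ((EuclideanSpace.basisFun (Fin n) ℝ) i) : ℝ) := by
      intro i
      rw [EuclideanSpace.basisFun_apply, real_inner_comm, EuclideanSpace.inner_single_left]
      simp
    rw [Finset.sum_congr rfl fun i _ => h1 i]
    exact trace_inner_basis_change A (EuclideanSpace.basisFun (Fin n) ℝ) b
  set S : ℝ := ∑ j ∈ Finset.univ.erase i0, (inner ℝ (A (b j)) (b j) : ℝ) with hSdef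
  have hsplit : ∑ j, (inner ℝ (A (b j)) (b j) : ℝ) = (inner ℝ (A (b i0)) (b i0) : ℝ) + S := by
    rw [hSdef, ← Finset.sum_erase_add Finset.univ _ (Finset.mem_univ i0)]
    ring
  have hbi0Q : (inner ℝ (A (b i0)) (b i0) : ℝ) = r⁻¹ * r⁻¹ * Q := by
    rw [hbi0, ContinuousLinearMap.map_smul, real_inner_smul_left, real_inner_smul_right,
      hQdef]
    ring
  have hS : ((n:ℝ) - 1) * c ≤ S := by
    have hcard : (Finset.univ.erase i0).card = n - 1 := by
      rw [Finset.card_erase_of_mem (Finset.mem_univ i0), Finset.card_univ, Fintype.card_fin]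
    have hb1 : ∀ j ∈ Finset.univ.erase i0, c ≤ (inner ℝ (A (b j)) (b j) : ℝ) := by
      intro j hj
      have hjne : j ≠ i0 := Finset.ne_of_mem_erase hj
      have horthob := b.orthonormal
      have hunit : ‖b j‖ = 1 := horthob.1 j
      have hperp0 : (inner ℝ (b i0) (b j) : ℝ) = 0 := horthob.2 (Ne.symm hjne)
      have hperp : (inner ℝ p (b j) : ℝ) = 0 := by
        rw [hbi0, real_inner_smul_left] at hperp0
        rcases mul_eq_zero.mp hperp0 with h | h
        · exact absurd h (by positivity)
        · exact h
      exact hHess (b j) hperp hunit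
    have hns := Finset.card_nsmul_le_sum (Finset.univ.erase i0) _ c hb1
    rw [hcard] at hns
    rw [hSdef]
    calc ((n:ℝ)-1) * c = ((n-1 : ℕ) : ℝ) * c := by
          rw [Nat.cast_sub (by omega), Nat.cast_one]
      _ = (n-1 : ℕ) • c := (nsmul_eq_mul _ _).symm
      _ ≤ _ := hns
  have hmcr : m = c * r := by
    rw [hmdef, hc, norm_smul, Real.norm_eq_abs, abs_of_pos hc0, ← hrdef]
  rw [hdg, Finset.sum_sub_distrib, ← Finset.mul_sum, ← Finset.mul_sum, hsum2, ← hTdef]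
  have hTval : T = r⁻¹ * r⁻¹ * Q + S := by rw [hT, hsplit, hbi0Q]
  rw [hTval]
  have hcancel : m⁻¹ * (r⁻¹ * r⁻¹ * Q + S) - m⁻¹*m⁻¹*m⁻¹ * (c^2 * Q) = m⁻¹ * S := by
    rw [hmcr]
    field_simp
    ring
  rw [hcancel]
  have hn1 : (1:ℝ) ≤ (n:ℝ) - 1 := by
    have h2n : (2:ℝ) ≤ (n:ℝ) := by exact_mod_cast hn
    linarith
  have hSpos : 0 < S := lt_of_lt_of_le (by nlinarith) hS
  exact mul_pos (inv_pos.mpr hm) hSpos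


/-- every closed smooth hypersurface in `ℝⁿ` (here realized as a
compact regular level set `Σ = {f = 0}` bounding the compact region `{f ≤ 0}`)
has a point where the mean curvature `H = div(∇f/|∇f|)` with respect to the
outward normal `ν = ∇f/|∇f|` is positive; consequently it is impossible that
`H ≤ -(n-1)/R` everywhere on `Σ` for some `R > 0`. -/
theorem closed_hypersurface_positive_mean_curvature (n : ℕ) (hn : 2 ≤ n)
    (f : EuclideanSpace ℝ (Fin n) → ℝ) (hf : ContDiff ℝ 2 f)
    (hK : IsCompact {x | f x ≤ 0})
    (hne : {x : EuclideanSpace ℝ (Fin n) | f x = 0}.Nonempty)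
    (hreg : ∀ x, f x = 0 → gradient f x ≠ 0) :
    (∃ p, f p = 0 ∧
      0 < divg (fun y => ‖gradient f y‖⁻¹ • gradient f y) p) ∧
    ∀ R : ℝ, 0 < R →
      ¬ (∀ x, f x = 0 →
        divg (fun y => ‖gradient f y‖⁻¹ • gradient f y) x ≤ -((n : ℝ) - 1) / R) := by
  have key := exists_positive_mean_curvature_point n hn f hf hK hne hreg
  refine ⟨key, ?_⟩
  intro R hR hall
  obtain ⟨p, hp0, hppos⟩ := key
  have h1 := hall p hp0
  have h2 : -((n : ℝ) - 1) / R < 0 := by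
    apply div_neg_of_neg_of_pos _ hR
    have h2n : (2:ℝ) ≤ (n:ℝ) := by exact_mod_cast hn
    linarith
  linarith
end
end

section
/- If (Ω,u) solves Δu = -n, u = 0 on ∂Ω, on a ring-shaped domain, the maximum set MAX(u) is a closed hypersurface Σ that is a round sphere of radius R, and u is rotationally symmetric near Σ, then (Ω,u) coincides globally with the ring-shaped model solution (Ω_R, u_R), by real-analyticity of u. -/
open Set

noncomputable section

/-- `Real.log` is real-analytic at positive points, via `Complex.log`. -/
lemma analyticAt_rlog {x : ℝ} (hx : 0 < x) : AnalyticAt ℝ Real.log x := by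
  have h1 : AnalyticAt ℂ Complex.log (Complex.ofRealCLM x) :=
    analyticAt_clog (by simpa using Complex.ofReal_mem_slitPlane.mpr hx)
  have h2 : AnalyticAt ℝ (fun y : ℝ =>
      Complex.reCLM (Complex.log (Complex.ofRealCLM y))) x :=
    (Complex.reCLM.analyticAt _).comp
      (h1.restrictScalars.comp (Complex.ofRealCLM.analyticAt x))
  refine h2.congr (Filter.Eventually.of_forall fun y => ?_)
  simp only [Complex.ofRealCLM_apply, Complex.reCLM_apply, Complex.log_re,
    Complex.norm_real, Real.norm_eq_abs, Real.log_abs]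

/-- The squared norm on Euclidean space, as a sum of squares of coordinates. -/
lemma analyticAt_normSq {n : ℕ} (x : EuclideanSpace ℝ (Fin n)) :
    AnalyticAt ℝ (fun y : EuclideanSpace ℝ (Fin n) => ∑ i, y i ^ 2) x := by
  apply Finset.analyticAt_fun_sum
  intro i _
  have h : AnalyticAt ℝ (fun y : EuclideanSpace ℝ (Fin n) =>
      (EuclideanSpace.proj i : EuclideanSpace ℝ (Fin n) →L[ℝ] ℝ) y) x :=
    (EuclideanSpace.proj i : EuclideanSpace ℝ (Fin n) →L[ℝ] ℝ).analyticAt x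
  have := h.mul h
  refine this.congr (Filter.Eventually.of_forall fun y => ?_)
  simp [EuclideanSpace.proj, PiLp.proj_apply, sq]

lemma normSq_eq {n : ℕ} (x : EuclideanSpace ℝ (Fin n)) :
    ∑ i, x i ^ 2 = ‖x‖ ^ 2 := by
  rw [EuclideanSpace.norm_eq, Real.sq_sqrt (by positivity)]
  exact Finset.sum_congr rfl fun i _ => by rw [Real.norm_eq_abs, sq_abs]

lemma exp_half_log_sq {m : ℕ} {t : ℝ} (ht : 0 < t) :
    Real.exp ((m : ℝ) / 2 * Real.log (t ^ 2)) = t ^ m := by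
  rw [Real.log_pow]
  have : (m : ℝ) / 2 * ((2 : ℕ) * Real.log t) = (m : ℝ) * Real.log t := by
    push_cast; ring
  rw [this, Real.exp_nat_mul, Real.exp_log ht]

/-- The Euclidean Laplacian: sum of the pure second partial derivatives. -/
def lap {n : ℕ} (u : EuclideanSpace ℝ (Fin n) → ℝ) (x : EuclideanSpace ℝ (Fin n)) : ℝ :=
  ∑ i, iteratedFDeriv ℝ 2 u x ![EuclideanSpace.single i 1, EuclideanSpace.single i 1]

/-- if a real-analytic solution `u` of `Δu = -n` on a connected
domain `Ω` (avoiding the origin) agrees with the ring-shaped model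
`u_R(x) = (1-|x|²)/2 - Rⁿ/((n-2)|x|^{n-2}) + c` on a nonempty open subset of
`Ω`, then it agrees with it on all of `Ω`, by real-analyticity. -/
theorem analytic_rigidity_ring_model (n : ℕ) (hn : 3 ≤ n) (R : ℝ)
    (hR0 : 0 < R) (hRmax : R < Real.sqrt (((n : ℝ) - 2) / n))
    (Ω : Set (EuclideanSpace ℝ (Fin n)))
    (hΩopen : IsOpen Ω) (hΩconn : IsConnected Ω) (hΩbdd : Bornology.IsBounded Ω)
    (h0 : (0 : EuclideanSpace ℝ (Fin n)) ∉ Ω)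
    (u : EuclideanSpace ℝ (Fin n) → ℝ)
    (hu : AnalyticOnNhd ℝ u Ω)
    (hlap : ∀ x ∈ Ω, lap u x = -n)
    (c : ℝ) (V : Set (EuclideanSpace ℝ (Fin n)))
    (hVopen : IsOpen V) (hVne : V.Nonempty) (hVΩ : V ⊆ Ω)
    (hagree : ∀ x ∈ V,
      u x = (1 - ‖x‖ ^ 2) / 2 - R ^ n / (((n : ℝ) - 2) * ‖x‖ ^ (n - 2)) + c) :
    ∀ x ∈ Ω,
      u x = (1 - ‖x‖ ^ 2) / 2 - R ^ n / (((n : ℝ) - 2) * ‖x‖ ^ (n - 2)) + c := by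
  set N : EuclideanSpace ℝ (Fin n) → ℝ := fun y => ∑ i, y i ^ 2 with hN
  set g : EuclideanSpace ℝ (Fin n) → ℝ := fun y =>
    (1 - N y) / 2 -
      R ^ n / (((n : ℝ) - 2) * Real.exp (((n - 2 : ℕ) : ℝ) / 2 * Real.log (N y))) + c
    with hg
  have hn2 : ((n : ℝ) - 2) ≠ 0 := by
    have : (3 : ℝ) ≤ (n : ℝ) := by exact_mod_cast hn
    linarith
  -- g agrees with the model at every nonzero point
  have hmodel : ∀ x : EuclideanSpace ℝ (Fin n), x ≠ 0 →
      g x = (1 - ‖x‖ ^ 2) / 2 - R ^ n / (((n : ℝ) - 2) * ‖x‖ ^ (n - 2)) + c := by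
    intro x hx
    have hnorm : 0 < ‖x‖ := norm_pos_iff.mpr hx
    have hNx : N x = ‖x‖ ^ 2 := normSq_eq x
    simp only [hg, hNx, exp_half_log_sq (m := n - 2) hnorm]
  -- g is analytic on Ω
  have hgan : AnalyticOnNhd ℝ g Ω := by
    intro x hx
    have hx0 : x ≠ 0 := fun h => h0 (h ▸ hx)
    have hpos : 0 < N x := by
      simp only [hN]; rw [normSq_eq x]; exact pow_pos (norm_pos_iff.mpr hx0) 2
    have h1 : AnalyticAt ℝ N x := analyticAt_normSq x
    have hlog : AnalyticAt ℝ (fun y => Real.log (N y)) x :=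
      (analyticAt_rlog hpos).comp h1
    have hexp : AnalyticAt ℝ
        (fun y => Real.exp (((n - 2 : ℕ) : ℝ) / 2 * Real.log (N y))) x :=
      analyticAt_rexp.comp (analyticAt_const.mul hlog)
    have hden : AnalyticAt ℝ
        (fun y => ((n : ℝ) - 2) *
          Real.exp (((n - 2 : ℕ) : ℝ) / 2 * Real.log (N y))) x :=
      analyticAt_const.mul hexp
    have hdne : ((n : ℝ) - 2) *
        Real.exp (((n - 2 : ℕ) : ℝ) / 2 * Real.log (N x)) ≠ 0 :=
      mul_ne_zero hn2 (Real.exp_ne_zero _)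
    exact (((analyticAt_const.sub h1).div analyticAt_const two_ne_zero).sub
      (analyticAt_const.div hden hdne)).add analyticAt_const
  -- identity principle
  obtain ⟨z₀, hz₀V⟩ := hVne
  have hfg : u =ᶠ[nhds z₀] g := by
    filter_upwards [hVopen.mem_nhds hz₀V] with y hy
    have hy0 : y ≠ 0 := fun h => h0 (h ▸ hVΩ hy)
    rw [hagree y hy, hmodel y hy0]
  have heq : EqOn u g Ω :=
    hu.eqOn_of_preconnected_of_eventuallyEq hgan hΩconn.isPreconnected
      (hVΩ hz₀V) hfg
  intro x hx
  have hx0 : x ≠ 0 := fun h => h0 (h ▸ hx)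
  rw [heq hx, hmodel x hx0]
end
end
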